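/- arXiv:0906.2215 — 2 statements merged into one kernel-verified Lean document; each statement's English description precedes it below -/
import Mathlib

section
/- For every positive integer k, the identity (Λ_4 − 1)(Λ_{2(4k+1)} − 1)(Λ_{4k+3} − 1)((1/2)Λ_{4k+3} − 1) = (2Λ_{4(4k+1)} − Λ_4 − Λ_{2(4k+1)} + 1)(2k·Λ_{4k+3} + 1) holds in the group algebra ℚ[ℂˣ]. -/
/-- `Λ n` : the element of the group algebra `ℚ[ℂˣ]` given by the sum of the
basis elements corresponding to the `n`-th roots of unity (junk value `0` for `n = 0`). -/
noncomputable def Lambda (n : ℕ) : MonoidAlgebra ℚ ℂˣ :=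
  if h : n = 0 then 0 else
    haveI : NeZero n := ⟨h⟩
    haveI : Fintype (rootsOfUnity n ℂ) := Fintype.ofFinite _
    ∑ ζ : rootsOfUnity n ℂ, MonoidAlgebra.single (ζ : ℂˣ) (1 : ℚ)

open Finset in
lemma Lambda_mul (m n : ℕ) (hm : m ≠ 0) (hn : n ≠ 0) :
    Lambda m * Lambda n = (Nat.gcd m n : ℚ) • Lambda (Nat.lcm m n) := by
  classical
  haveI : NeZero m := ⟨hm⟩
  haveI : NeZero n := ⟨hn⟩
  have hg : Nat.gcd m n ≠ 0 := Nat.gcd_ne_zero_left hm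
  have hl : Nat.lcm m n ≠ 0 := Nat.lcm_ne_zero hm hn
  haveI : NeZero (Nat.lcm m n) := ⟨hl⟩
  letI : Fintype (rootsOfUnity m ℂ) := Fintype.ofFinite _
  letI : Fintype (rootsOfUnity n ℂ) := Fintype.ofFinite _
  letI : Fintype (rootsOfUnity (Nat.lcm m n) ℂ) := Fintype.ofFinite _
  set g := Nat.gcd m n with hgdef
  set l := Nat.lcm m n with hldef
  let φ : (rootsOfUnity m ℂ × rootsOfUnity n ℂ) →* rootsOfUnity l ℂ :=
    ((Subgroup.inclusion (rootsOfUnity_le_of_dvd (Nat.dvd_lcm_left m n))).comp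
        (MonoidHom.fst _ _)) *
      ((Subgroup.inclusion (rootsOfUnity_le_of_dvd (Nat.dvd_lcm_right m n))).comp
        (MonoidHom.snd _ _))
  have hφ : ∀ p : rootsOfUnity m ℂ × rootsOfUnity n ℂ,
      ((φ p : ℂˣ)) = (p.1 : ℂˣ) * (p.2 : ℂˣ) := fun p => rfl
  have hdm : g ∣ m := Nat.gcd_dvd_left m n
  have hdn : g ∣ n := Nat.gcd_dvd_right m n
  have hsurj : Function.Surjective φ := by
    rintro ⟨c, hcmem⟩
    have hcl : c ^ (l : ℤ) = 1 := by
      rw [zpow_natCast]; exact (mem_rootsOfUnity l c).mp hcmem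
    set a := Nat.gcdA m n with hadef
    set b := Nat.gcdB m n with hbdef
    have hbez : (g : ℤ) = m * a + n * b := Nat.gcd_eq_gcd_ab m n
    have hnm : ((n / g : ℕ) : ℤ) * (m : ℤ) = (l : ℤ) := by
      have : (n / g) * m = l := by
        rw [hldef, Nat.lcm, mul_comm (n / g) m, ← Nat.mul_div_assoc m hdn]
      exact_mod_cast this
    have hmn : ((m / g : ℕ) : ℤ) * (n : ℤ) = (l : ℤ) := by
      have : (m / g) * n = l := by
        rw [hldef, Nat.lcm, mul_comm (m / g) n, ← Nat.mul_div_assoc n hdm, mul_comm n m]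
      exact_mod_cast this
    have hsum : b * ((n / g : ℕ) : ℤ) + a * ((m / g : ℕ) : ℤ) = 1 := by
      have h1 : ((n / g : ℕ) : ℤ) * (g : ℤ) = (n : ℤ) := by
        exact_mod_cast Nat.div_mul_cancel hdn
      have h2 : ((m / g : ℕ) : ℤ) * (g : ℤ) = (m : ℤ) := by
        exact_mod_cast Nat.div_mul_cancel hdm
      have hg' : (g : ℤ) ≠ 0 := by exact_mod_cast hg
      apply mul_left_cancel₀ hg'
      rw [mul_one]
      calc (g : ℤ) * (b * ((n / g : ℕ) : ℤ) + a * ((m / g : ℕ) : ℤ))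
          = b * (((n / g : ℕ) : ℤ) * g) + a * (((m / g : ℕ) : ℤ) * g) := by ring
        _ = b * n + a * m := by rw [h1, h2]
        _ = (g : ℤ) := by rw [hbez]; ring
    have hμ : (c ^ (b * ((n / g : ℕ) : ℤ))) ∈ rootsOfUnity m ℂ := by
      rw [mem_rootsOfUnity, ← zpow_natCast (c ^ (b * ((n / g : ℕ) : ℤ))) m, ← zpow_mul]
      have he : b * ((n / g : ℕ) : ℤ) * (m : ℤ) = (l : ℤ) * b := by
        rw [mul_assoc, hnm]; ring
      rw [he, zpow_mul, hcl, one_zpow]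
    have hν : (c ^ (a * ((m / g : ℕ) : ℤ))) ∈ rootsOfUnity n ℂ := by
      rw [mem_rootsOfUnity, ← zpow_natCast (c ^ (a * ((m / g : ℕ) : ℤ))) n, ← zpow_mul]
      have he : a * ((m / g : ℕ) : ℤ) * (n : ℤ) = (l : ℤ) * a := by
        rw [mul_assoc, hmn]; ring
      rw [he, zpow_mul, hcl, one_zpow]
    refine ⟨(⟨_, hμ⟩, ⟨_, hν⟩), ?_⟩
    apply Subtype.ext
    show c ^ (b * ((n / g : ℕ) : ℤ)) * c ^ (a * ((m / g : ℕ) : ℤ)) = c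
    rw [← zpow_add, hsum, zpow_one]
  have hker : Nat.card φ.ker = g := by
    have h1 : Nat.card (rootsOfUnity m ℂ × rootsOfUnity n ℂ)
        = Nat.card ((rootsOfUnity m ℂ × rootsOfUnity n ℂ) ⧸ φ.ker) * Nat.card φ.ker :=
      Subgroup.card_eq_card_quotient_mul_card_subgroup _
    have h2 : Nat.card ((rootsOfUnity m ℂ × rootsOfUnity n ℂ) ⧸ φ.ker)
        = Nat.card (rootsOfUnity l ℂ) :=
      Nat.card_congr (QuotientGroup.quotientKerEquivOfSurjective φ hsurj).toEquiv
    have h3 : Nat.card (rootsOfUnity m ℂ × rootsOfUnity n ℂ) = m * n := by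
      rw [Nat.card_prod,
        Complex.card_rootsOfUnity, Complex.card_rootsOfUnity]
    have h4 : Nat.card (rootsOfUnity l ℂ) = l := by
      rw [Complex.card_rootsOfUnity]
    have h5 : g * l = m * n := Nat.gcd_mul_lcm m n
    have h6 : l * Nat.card φ.ker = l * g := by
      rw [h2, h4, h3] at h1
      rw [← h1, ← h5, mul_comm]
    exact Nat.eq_of_mul_eq_mul_left (Nat.pos_of_ne_zero hl) h6
  have hfib : ∀ γ : rootsOfUnity l ℂ, Fintype.card {p // φ p = γ} = g := by
    intro γ
    have e1 : {p // φ p = γ} ≃ (φ ⁻¹' {γ} : Set _) := Equiv.subtypeEquivRight (by simp)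
    have e2 := MonoidHom.fiberEquivKerOfSurjective hsurj γ
    rw [← Nat.card_eq_fintype_card, Nat.card_congr (e1.trans e2), hker]
  rw [Lambda, Lambda, Lambda, dif_neg hm, dif_neg hn, dif_neg hl]
  rw [Finset.sum_mul_sum]
  simp_rw [MonoidAlgebra.single_mul_single, one_mul]
  have hps : ∑ p : rootsOfUnity m ℂ × rootsOfUnity n ℂ,
      MonoidAlgebra.single ((φ p : ℂˣ)) (1 : ℚ)
        = ∑ x : rootsOfUnity m ℂ, ∑ y : rootsOfUnity n ℂ,
            MonoidAlgebra.single ((x : ℂˣ) * (y : ℂˣ)) (1 : ℚ) := by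
    rw [Fintype.sum_prod_type]
    exact Finset.sum_congr rfl fun x _ => Finset.sum_congr rfl fun y _ => rfl
  refine Eq.trans hps.symm ?_
  rw [← Fintype.sum_fiberwise' φ (fun γ => MonoidAlgebra.single ((γ : ℂˣ)) (1 : ℚ)),
    Finset.smul_sum]
  refine Finset.sum_congr (by convert rfl) fun γ _ => ?_
  rw [Finset.sum_const, Finset.card_univ, hfib γ, ← Nat.cast_smul_eq_nsmul ℚ]

theorem alexander_divisor_case_II (k : ℕ) (hk : 0 < k) :
    (Lambda 4 - 1) * (Lambda (2 * (4 * k + 1)) - 1) * (Lambda (4 * k + 3) - 1)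
        * ((1 / 2 : ℚ) • Lambda (4 * k + 3) - 1) =
      ((2 : ℚ) • Lambda (4 * (4 * k + 1)) - Lambda 4 - Lambda (2 * (4 * k + 1)) + 1)
        * ((2 * k : ℚ) • Lambda (4 * k + 3) + 1) := by
  have h4 : (4 : ℕ) ≠ 0 := by norm_num
  have hb : 2 * (4 * k + 1) ≠ 0 := by omega
  have hc : 4 * k + 3 ≠ 0 := by omega
  have hgcd : Nat.gcd 4 (2 * (4 * k + 1)) = 2 := by
    have h1 : Nat.gcd 4 (2 * (4 * k + 1)) = 2 * Nat.gcd 2 (4 * k + 1) := by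
      rw [show (4 : ℕ) = 2 * 2 from rfl, Nat.gcd_mul_left]
    have h2 : Nat.gcd 2 (4 * k + 1) = 1 := Nat.coprime_two_left.mpr ⟨2 * k, by ring⟩
    rw [h1, h2]
  have hlcm : Nat.lcm 4 (2 * (4 * k + 1)) = 4 * (4 * k + 1) := by
    have := Nat.gcd_mul_lcm 4 (2 * (4 * k + 1))
    rw [hgcd] at this
    omega
  have hab := Lambda_mul 4 (2 * (4 * k + 1)) h4 hb
  rw [hgcd, hlcm] at hab
  have hcc := Lambda_mul (4 * k + 3) (4 * k + 3) hc hc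
  rw [Nat.gcd_self, Nat.lcm_self] at hcc
  set a := Lambda 4
  set b := Lambda (2 * (4 * k + 1))
  set c := Lambda (4 * k + 3)
  set L := Lambda (4 * (4 * k + 1))
  have hab' : a * b = (2 : ℚ) • L := by rw [hab]; norm_num
  have F1 : (a - 1) * (b - 1) = (2 : ℚ) • L - a - b + 1 := by
    rw [← hab']; ring
  have F2 : (c - 1) * ((1 / 2 : ℚ) • c - 1) = (2 * k : ℚ) • c + 1 := by
    have hcc' : c * c = ((4 * k + 3 : ℕ) : ℚ) • c := hcc
    have hq : (1 / 2 : ℚ) * ((4 * k + 3 : ℕ) : ℚ) - 1 / 2 - 1 = (2 * k : ℚ) := by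
      push_cast; ring
    calc (c - 1) * ((1 / 2 : ℚ) • c - 1)
        = (1 / 2 : ℚ) • (c * c) - (1 / 2 : ℚ) • c - c + 1 := by
          rw [sub_mul, mul_sub, mul_sub, mul_smul_comm]
          ring
      _ = (1 / 2 : ℚ) • (((4 * k + 3 : ℕ) : ℚ) • c) - (1 / 2 : ℚ) • c - (1 : ℚ) • c + 1 := by
          rw [hcc', one_smul]
      _ = ((1 / 2 : ℚ) * ((4 * k + 3 : ℕ) : ℚ)) • c - (1 / 2 : ℚ) • c - (1 : ℚ) • c + 1 := by
          rw [smul_smul]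
      _ = ((1 / 2 : ℚ) * ((4 * k + 3 : ℕ) : ℚ) - 1 / 2 - 1) • c + 1 := by
          rw [sub_smul, sub_smul]
      _ = (2 * k : ℚ) • c + 1 := by rw [hq]
  calc (a - 1) * (b - 1) * (c - 1) * ((1 / 2 : ℚ) • c - 1)
      = ((a - 1) * (b - 1)) * ((c - 1) * ((1 / 2 : ℚ) • c - 1)) := by ring
    _ = ((2 : ℚ) • L - a - b + 1) * ((2 * k : ℚ) • c + 1) := by rw [F1, F2]
end

section
/- The coefficient of the identity element 1 ∈ ℂˣ in the product ((1/264)Λ_{1213} − 1)((1/157)Λ_{1213} − 1)((1/114)Λ_{1213} − 1)((1/73)Λ_{1213} − 1) ∈ ℚ[ℂˣ] equals 4. -/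
noncomputable instance rootsFintype (n : ℕ) [NeZero n] : Fintype (rootsOfUnity n ℂ) :=
  Fintype.ofFinite _

lemma Lambda_eq (n : ℕ) [NeZero n] :
    Lambda n = ∑ ζ : rootsOfUnity n ℂ, MonoidAlgebra.single (ζ : ℂˣ) (1 : ℚ) := by
  rw [Lambda, dif_neg (NeZero.ne n)]

lemma Lambda_mul_self (n : ℕ) [NeZero n] :
    Lambda n * Lambda n = (n : ℚ) • Lambda n := by
  rw [Lambda_eq, Finset.sum_mul]
  have key : ∀ ζ : rootsOfUnity n ℂ,
      (MonoidAlgebra.single (ζ : ℂˣ) (1 : ℚ)) * (∑ η : rootsOfUnity n ℂ,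
        MonoidAlgebra.single (η : ℂˣ) (1 : ℚ)) =
      ∑ η : rootsOfUnity n ℂ, MonoidAlgebra.single (η : ℂˣ) (1 : ℚ) := by
    intro ζ
    rw [Finset.mul_sum]
    rw [← Equiv.sum_comp (Equiv.mulLeft ζ) (fun η => MonoidAlgebra.single (η : ℂˣ) (1 : ℚ))]
    refine Finset.sum_congr rfl fun η _ => ?_
    simp [MonoidAlgebra.single_mul_single]
  simp only [key, Finset.sum_const, Finset.card_univ, ← Nat.card_eq_fintype_card, Complex.card_rootsOfUnity,
    ← Nat.cast_smul_eq_nsmul ℚ]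

lemma Lambda_apply_one (n : ℕ) [NeZero n] : (Lambda n).coeff 1 = 1 := by
  rw [Lambda_eq]
  rw [MonoidAlgebra.coeff_sum, Finsupp.finset_sum_apply]
  simp only [MonoidAlgebra.coeff_single, Finsupp.single_apply, OneMemClass.coe_eq_one]
  simp

lemma step (L : MonoidAlgebra ℚ ℂˣ) (hL : L * L = (1213 : ℚ) • L) (a b : ℚ) :
    (a • L - 1) * (b • L - 1) = (a * b * 1213 - a - b) • L + 1 := by
  have : (a • L) * (b • L) = (a * b * 1213) • L := by
    rw [smul_mul_assoc, mul_smul_comm, hL, smul_smul, smul_smul]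
  rw [sub_mul, mul_sub, mul_sub, this, mul_one, one_mul, mul_one, sub_smul, sub_smul]
  abel

lemma step2 (L : MonoidAlgebra ℚ ℂˣ) (hL : L * L = (1213 : ℚ) • L) (c d : ℚ) :
    (c • L + 1) * (d • L + 1) = (c * d * 1213 + c + d) • L + 1 := by
  have : (c • L) * (d • L) = (c * d * 1213) • L := by
    rw [smul_mul_assoc, mul_smul_comm, hL, smul_smul, smul_smul]
  rw [add_mul, mul_add, mul_add, this, mul_one, one_mul, mul_one, add_smul, add_smul]
  abel

theorem betti_number_deg_1213 :
    ((((1 / 264 : ℚ) • Lambda 1213 - 1) * ((1 / 157 : ℚ) • Lambda 1213 - 1)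
        * ((1 / 114 : ℚ) • Lambda 1213 - 1) * ((1 / 73 : ℚ) • Lambda 1213 - 1)
        : MonoidAlgebra ℚ ℂˣ)).coeff 1 = (4 : ℚ) := by
  haveI : NeZero 1213 := ⟨by norm_num⟩
  set L := Lambda 1213 with hLdef
  have hL : L * L = (1213 : ℚ) • L := by
    have := Lambda_mul_self 1213
    simpa using this
  have e1 := step L hL (1/264) (1/157)
  have e2 := step L hL (1/114) (1/73)
  rw [mul_assoc, e1, e2, step2 L hL]
  have h1 : (L : MonoidAlgebra ℚ ℂˣ).coeff 1 = 1 := Lambda_apply_one 1213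
  rw [MonoidAlgebra.coeff_add, Finsupp.add_apply, MonoidAlgebra.coeff_smul, Finsupp.smul_apply, h1, MonoidAlgebra.one_def,
    MonoidAlgebra.coeff_single, Finsupp.single_apply, if_pos rfl]
  norm_num
end
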